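/- arXiv:1503.02831 — 3 statements merged into one kernel-verified Lean document; each statement's English description precedes it below -/
import Mathlib

section
/- For a, b, s > 0, the integral ∫₀^∞ exp(-s·x - (x + a²)/(2b)) · I₀(a·√x/b) dx equals (2b/(2sb+1)) · exp(a²·s/(2sb+1)) [with I₀ the modified Bessel function of the first kind of order 0]. Equivalently, the Laplace transform of the noncentral chi-square type density x ↦ (1/(2b)) exp(-(x+a²)/(2b)) I₀(a√x/b) at s is (1/(2sb+1)) exp(-a²s/(2sb+1)). -/
open Real MeasureTheory Set

/-- Modified Bessel function of the first kind of order 0. -/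
noncomputable def besselI0 (z : ℝ) : ℝ := ∑' k : ℕ, (z / 2) ^ (2 * k) / ((Nat.factorial k : ℝ)) ^ 2

lemma pow_exp_integrableOn {c : ℝ} (hc : 0 < c) (k : ℕ) :
    IntegrableOn (fun x : ℝ => x ^ k * Real.exp (-c * x)) (Ioi 0) := by
  have := integrableOn_rpow_mul_exp_neg_mul_rpow (s := (k : ℝ)) (p := 1)
    (lt_of_lt_of_le (by norm_num) (Nat.cast_nonneg k)) one_pos hc
  refine this.congr_fun (fun x hx => ?_) measurableSet_Ioi
  beta_reduce
  rw [Real.rpow_one, Real.rpow_natCast]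

lemma pow_exp_integral {c : ℝ} (hc : 0 < c) (k : ℕ) :
    ∫ x in Ioi (0 : ℝ), x ^ k * Real.exp (-c * x)
      = (Nat.factorial k : ℝ) / c ^ (k + 1) := by
  have h := integral_rpow_mul_exp_neg_mul_Ioi (a := (k : ℝ) + 1) (r := c)
    (by positivity) hc
  rw [show ((k : ℝ) + 1) - 1 = (k : ℝ) by ring] at h
  have heq : ∫ x in Ioi (0 : ℝ), x ^ k * Real.exp (-c * x)
      = ∫ t in Ioi (0 : ℝ), t ^ (k : ℝ) * Real.exp (-(c * t)) := by
    refine setIntegral_congr_fun measurableSet_Ioi (fun x hx => ?_)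
    rw [Real.rpow_natCast, neg_mul]
  rw [heq, h, show ((k : ℝ) + 1) = ((k + 1 : ℕ) : ℝ) by push_cast; ring, Real.rpow_natCast]
  rw [show ((k + 1 : ℕ) : ℝ) = (k : ℝ) + 1 by push_cast; ring, Real.Gamma_nat_eq_factorial]
  rw [div_pow, one_pow]
  ring

lemma key_integral {c d : ℝ} (hc : 0 < c) (hd : 0 ≤ d) :
    ∫ x in Ioi (0 : ℝ),
        (∑' k : ℕ, d ^ k * x ^ k / (Nat.factorial k : ℝ) ^ 2) * Real.exp (-c * x)
      = (1 / c) * Real.exp (d / c) := by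
  set F : ℕ → ℝ → ℝ := fun k x => d ^ k / (Nat.factorial k : ℝ) ^ 2 * (x ^ k * Real.exp (-c * x))
    with hF
  have hFint : ∀ k, IntegrableOn (F k) (Ioi 0) :=
    fun k => (pow_exp_integrableOn hc k).const_mul _
  have hFval : ∀ k, ∫ x in Ioi (0 : ℝ), F k x
      = d ^ k / (Nat.factorial k : ℝ) ^ 2 * ((Nat.factorial k : ℝ) / c ^ (k + 1)) := by
    intro k
    rw [hF]
    simp only
    rw [integral_const_mul, pow_exp_integral hc k]
  have hg : ∀ k : ℕ, d ^ k / (Nat.factorial k : ℝ) ^ 2 * ((Nat.factorial k : ℝ) / c ^ (k + 1))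
      = (1 / c) * ((d / c) ^ k / (Nat.factorial k : ℝ)) := by
    intro k
    have hk : (Nat.factorial k : ℝ) ≠ 0 := Nat.cast_ne_zero.2 k.factorial_ne_zero
    field_simp
    rw [div_pow, pow_succ, mul_comm (c ^ k) c, mul_assoc, mul_div_cancel₀ _ (pow_ne_zero k hc.ne'), mul_comm]
  have hsum : Summable (fun k : ℕ => (1 / c) * ((d / c) ^ k / (Nat.factorial k : ℝ))) :=
    (Real.summable_pow_div_factorial (d / c)).mul_left _
  have hswap : ∫ x in Ioi (0 : ℝ), ∑' k : ℕ, F k x = ∑' k : ℕ, ∫ x in Ioi (0 : ℝ), F k x := by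
    refine integral_tsum (fun k => (hFint k).aestronglyMeasurable) ?_
    have : ∀ k : ℕ, ∫⁻ x, ‖F k x‖ₑ ∂(volume.restrict (Ioi 0))
        = ENNReal.ofReal ((1 / c) * ((d / c) ^ k / (Nat.factorial k : ℝ))) := by
      intro k
      rw [← ofReal_integral_norm_eq_lintegral_enorm (hFint k)]
      congr 1
      have : ∫ x in Ioi (0 : ℝ), ‖F k x‖ = ∫ x in Ioi (0 : ℝ), F k x := by
        refine setIntegral_congr_fun measurableSet_Ioi (fun x hx => ?_)
        refine Real.norm_of_nonneg ?_
        have hx0 : (0 : ℝ) ≤ x := le_of_lt hx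
        positivity
      rw [this, hFval k, hg k]
    simp_rw [this]
    rw [← ENNReal.ofReal_tsum_of_nonneg (fun k => by positivity) hsum]
    exact ENNReal.ofReal_ne_top
  have hint_eq : ∀ x ∈ Ioi (0 : ℝ),
      (∑' k : ℕ, d ^ k * x ^ k / (Nat.factorial k : ℝ) ^ 2) * Real.exp (-c * x)
        = ∑' k : ℕ, F k x := by
    intro x hx
    rw [← tsum_mul_right]
    congr 1
    funext k
    rw [hF]
    ring
  rw [setIntegral_congr_fun measurableSet_Ioi hint_eq, hswap]
  have : ∀ k : ℕ, ∫ x in Ioi (0 : ℝ), F k x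
      = (1 / c) * ((d / c) ^ k / (Nat.factorial k : ℝ)) := fun k => by rw [hFval k, hg k]
  simp_rw [this]
  rw [tsum_mul_left]
  congr 1
  rw [Real.exp_eq_exp_ℝ, NormedSpace.exp_eq_tsum_div]

/-- Laplace transform of the noncentral chi-square type density:
for `a, b, s > 0`,
`∫₀^∞ (1/(2b)) exp(-(x+a²)/(2b)) I₀(a√x/b) exp(-s x) dx = (1/(2sb+1)) exp(-a²s/(2sb+1))`,
equivalently
`∫₀^∞ exp(-s·x - (x+a²)/(2b)) I₀(a√x/b) dx = (2b/(2sb+1)) exp(-a²s/(2sb+1))`. -/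
theorem stmt_0 (a b s : ℝ) (ha : 0 < a) (hb : 0 < b) (hs : 0 < s) :
    (∫ x in Ioi (0 : ℝ),
        Real.exp (-s * x - (x + a ^ 2) / (2 * b)) * besselI0 (a * Real.sqrt x / b)) =
      (2 * b / (2 * s * b + 1)) * Real.exp (-(a ^ 2 * s) / (2 * s * b + 1)) ∧
    (∫ x in Ioi (0 : ℝ),
        Real.exp (-s * x) *
          ((1 / (2 * b)) * Real.exp (-(x + a ^ 2) / (2 * b)) * besselI0 (a * Real.sqrt x / b))) =
      (1 / (2 * s * b + 1)) * Real.exp (-(a ^ 2 * s) / (2 * s * b + 1)) := by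
  set c : ℝ := s + 1 / (2 * b) with hc_def
  have hc : 0 < c := by positivity
  set d : ℝ := a ^ 2 / (4 * b ^ 2) with hd_def
  have hd : 0 ≤ d := by positivity
  have hb' : (2 * b) ≠ 0 := by positivity
  have hbessel : ∀ x ∈ Ioi (0 : ℝ), besselI0 (a * Real.sqrt x / b)
      = ∑' k : ℕ, d ^ k * x ^ k / (Nat.factorial k : ℝ) ^ 2 := by
    intro x hx
    have hx0 : (0 : ℝ) ≤ x := le_of_lt hx
    unfold besselI0
    congr 1
    funext k
    congr 1
    rw [pow_mul, ← mul_pow]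
    congr 1
    rw [div_pow, div_pow, mul_pow, Real.sq_sqrt hx0, hd_def]
    ring
  have key1 : (∫ x in Ioi (0 : ℝ),
      Real.exp (-s * x - (x + a ^ 2) / (2 * b)) * besselI0 (a * Real.sqrt x / b)) =
      Real.exp (-(a ^ 2) / (2 * b)) * ((1 / c) * Real.exp (d / c)) := by
    have step : (∫ x in Ioi (0 : ℝ),
        Real.exp (-s * x - (x + a ^ 2) / (2 * b)) * besselI0 (a * Real.sqrt x / b)) =
        Real.exp (-(a ^ 2) / (2 * b)) * ∫ x in Ioi (0 : ℝ),
          (∑' k : ℕ, d ^ k * x ^ k / (Nat.factorial k : ℝ) ^ 2) * Real.exp (-c * x) := by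
      rw [← integral_const_mul]
      refine setIntegral_congr_fun measurableSet_Ioi (fun x hx => ?_)
      rw [hbessel x hx]
      rw [show -s * x - (x + a ^ 2) / (2 * b) = -(a ^ 2) / (2 * b) + -c * x by
        rw [hc_def]; field_simp; ring, Real.exp_add]
      ring
    rw [step, key_integral hc hd]
  have hval : Real.exp (-(a ^ 2) / (2 * b)) * ((1 / c) * Real.exp (d / c))
      = (2 * b / (2 * s * b + 1)) * Real.exp (-(a ^ 2 * s) / (2 * s * b + 1)) := by
    have hsb : (2 * s * b + 1) ≠ 0 := by positivity
    have h1 : (1 / c) = 2 * b / (2 * s * b + 1) := by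
      rw [hc_def]; field_simp
    have h2 : -(a ^ 2) / (2 * b) + d / c = -(a ^ 2 * s) / (2 * s * b + 1) := by
      rw [hc_def, hd_def]; field_simp; ring
    rw [← mul_assoc, mul_comm (Real.exp _) (1 / c), mul_assoc, ← Real.exp_add, h1, h2]
  have first : (∫ x in Ioi (0 : ℝ),
      Real.exp (-s * x - (x + a ^ 2) / (2 * b)) * besselI0 (a * Real.sqrt x / b)) =
      (2 * b / (2 * s * b + 1)) * Real.exp (-(a ^ 2 * s) / (2 * s * b + 1)) := by
    rw [key1, hval]
  refine ⟨first, ?_⟩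
  have heq : (∫ x in Ioi (0 : ℝ),
      Real.exp (-s * x) *
        ((1 / (2 * b)) * Real.exp (-(x + a ^ 2) / (2 * b)) * besselI0 (a * Real.sqrt x / b)))
      = (1 / (2 * b)) * ∫ x in Ioi (0 : ℝ),
          Real.exp (-s * x - (x + a ^ 2) / (2 * b)) * besselI0 (a * Real.sqrt x / b) := by
    rw [← integral_const_mul]
    refine setIntegral_congr_fun measurableSet_Ioi (fun x hx => ?_)
    rw [show -s * x - (x + a ^ 2) / (2 * b) = -s * x + -(x + a ^ 2) / (2 * b) by ring,
      Real.exp_add]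
    ring
  rw [heq, first]
  have hsb : (2 * s * b + 1) ≠ 0 := by positivity
  field_simp
end

section
/- Let X be a random variable whose conditional distribution given b > 0 is noncentral chi-square with density f(x|b) = (1/(2b)) exp(-(x+A²)/(2b)) I₀(A√x/b), and let b follow a Gamma distribution with shape α > 0 and mean b₀ > 0, i.e., density f_b(b) = (α/b₀)^α b^{α-1} exp(-αb/b₀)/Γ(α). Then the unconditional MGF M_X(s) = E[exp(-sX)] equals ((α/b₀)^α/Γ(α)) · ∫₀^∞ (b^{α-1}/(2bs+1)) exp(-A²s/(2bs+1) - αb/b₀) db for s ≥ 0. -/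
open Real MeasureTheory Set
open scoped ENNReal NNReal

namespace HKaux


lemma summand_eq (z : ℝ) (k : ℕ) :
    (z / 2) ^ (2 * k) / ((Nat.factorial k : ℝ)) ^ 2
      = (z ^ 2 / 4) ^ k / ((Nat.factorial k : ℝ)) ^ 2 := by
  have h : (z / 2) ^ (2 * k) = (z ^ 2 / 4) ^ k := by
    rw [pow_mul]; congr 1; ring
  rw [h]

lemma summable_aux (t : ℝ) (ht : 0 ≤ t) :
    Summable (fun k : ℕ => t ^ k / ((Nat.factorial k : ℝ)) ^ 2) := by
  refine Summable.of_nonneg_of_le (fun k => by positivity) (fun k => ?_)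
    (Real.summable_pow_div_factorial t)
  have h1 : (1:ℝ) ≤ (Nat.factorial k : ℝ) := by exact_mod_cast k.factorial_pos
  have h2 : (Nat.factorial k : ℝ) ≤ ((Nat.factorial k : ℝ)) ^ 2 := by nlinarith
  exact div_le_div_of_nonneg_left (by positivity) (by linarith) h2

lemma besselI0_eq (z : ℝ) :
    besselI0 z = ∑' k : ℕ, (z ^ 2 / 4) ^ k / ((Nat.factorial k : ℝ)) ^ 2 :=
  tsum_congr (summand_eq z)

lemma besselI0_summable (z : ℝ) :
    Summable (fun k : ℕ => (z / 2) ^ (2 * k) / ((Nat.factorial k : ℝ)) ^ 2) := by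
  have := summable_aux (z ^ 2 / 4) (by positivity)
  exact (summable_congr (fun k => (summand_eq z k))).2 this

lemma besselI0_nonneg (z : ℝ) : 0 ≤ besselI0 z := by
  rw [besselI0_eq]
  exact tsum_nonneg (fun k => by positivity)

lemma measurable_besselI0 : Measurable besselI0 := by
  have hmeas : ∀ n : ℕ, Measurable (fun z : ℝ =>
      ∑ k ∈ Finset.range n, (z / 2) ^ (2 * k) / ((Nat.factorial k : ℝ)) ^ 2) := fun n =>
    Finset.measurable_sum _ fun k _ =>
      ((measurable_id.div_const 2).pow_const (2 * k)).div_const _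
  refine measurable_of_tendsto_metrizable' Filter.atTop hmeas (tendsto_pi_nhds.2 fun z => ?_)
  exact (besselI0_summable z).hasSum.tendsto_sum_nat

lemma exp_eq_tsum' (t : ℝ) : Real.exp t = ∑' k : ℕ, t ^ k / (Nat.factorial k : ℝ) := by
  rw [Real.exp_eq_exp_ℝ, NormedSpace.exp_eq_tsum_div]

lemma pow_exp_integrable {lam : ℝ} (hlam : 0 < lam) (k : ℕ) :
    IntegrableOn (fun x : ℝ => x ^ k * Real.exp (-lam * x)) (Ioi 0) := by
  have h := integrableOn_rpow_mul_exp_neg_mul_rpow (p := 1) (s := (k:ℝ))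
    (by exact_mod_cast neg_one_lt_zero.trans_le (Nat.cast_nonneg k)) zero_lt_one hlam
  refine h.congr_fun (fun x hx => ?_) measurableSet_Ioi
  simp only [Real.rpow_natCast, Real.rpow_one]

lemma pow_exp_integral {lam : ℝ} (hlam : 0 < lam) (k : ℕ) :
    ∫ x in Ioi (0:ℝ), x ^ k * Real.exp (-lam * x)
      = (Nat.factorial k : ℝ) / lam ^ (k + 1) := by
  have h := Real.integral_rpow_mul_exp_neg_mul_Ioi (a := (k:ℝ) + 1) (r := lam)
    (by positivity) hlam
  have h2 : ∀ x ∈ Ioi (0:ℝ), x ^ ((k:ℝ) + 1 - 1) * Real.exp (-(lam * x))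
      = x ^ k * Real.exp (-lam * x) := by
    intro x hx
    rw [add_sub_cancel_right, Real.rpow_natCast, neg_mul]
  rw [setIntegral_congr_fun measurableSet_Ioi h2] at h
  have h3 : ((k:ℝ) + 1) = ((k + 1 : ℕ) : ℝ) := by push_cast; ring
  rw [h, Real.Gamma_nat_eq_factorial, h3, Real.rpow_natCast, one_div, inv_pow]
  ring

lemma inner_key (A s b : ℝ) (hA : 0 ≤ A) (hs : 0 ≤ s) (hb : 0 < b) :
    IntegrableOn (fun x : ℝ => Real.exp (-s * x) *
        ((1 / (2 * b)) * Real.exp (-(x + A ^ 2) / (2 * b)) * besselI0 (A * Real.sqrt x / b)))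
      (Ioi 0)
    ∧ ∫ x in Ioi (0:ℝ), Real.exp (-s * x) *
        ((1 / (2 * b)) * Real.exp (-(x + A ^ 2) / (2 * b)) * besselI0 (A * Real.sqrt x / b))
      = (1 / (2 * b * s + 1)) * Real.exp (-(A ^ 2 * s) / (2 * b * s + 1)) := by
  have hb0 : b ≠ 0 := ne_of_gt hb
  set lam : ℝ := s + 1 / (2 * b) with hlam_def
  set c : ℝ := A ^ 2 / (4 * b ^ 2) with hc_def
  set C : ℝ := (1 / (2 * b)) * Real.exp (-A ^ 2 / (2 * b)) with hC_def
  have hlam : 0 < lam := by rw [hlam_def]; positivity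
  have hlam0 : lam ≠ 0 := ne_of_gt hlam
  have h2bs : (0:ℝ) < 2 * b * s + 1 := by positivity
  have hC : 0 < C := by rw [hC_def]; positivity
  have hc : 0 ≤ c := by rw [hc_def]; positivity
  clear_value lam c C
  set g : ℕ → ℝ → ℝ := fun k x =>
    (C * (c ^ k / ((Nat.factorial k : ℝ)) ^ 2)) * (x ^ k * Real.exp (-lam * x)) with hg_def
  -- integrability and integral of each term
  have hgint : ∀ k, IntegrableOn (g k) (Ioi 0) := fun k =>
    (pow_exp_integrable hlam k).const_mul _
  have hgval : ∀ k, ∫ x in Ioi (0:ℝ), g k x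
      = (C / lam) * ((c / lam) ^ k / (Nat.factorial k : ℝ)) := by
    intro k
    have hk : (Nat.factorial k : ℝ) ≠ 0 := by positivity
    simp only [hg_def]
    rw [integral_const_mul, pow_exp_integral hlam k, div_pow]
    field_simp
    ring
  have hgnn : ∀ k, ∀ x ∈ Ioi (0:ℝ), 0 ≤ g k x := by
    intro k x hx
    have hx0 : (0:ℝ) < x := hx
    simp only [hg_def]
    positivity
  have hval_nn : ∀ k, 0 ≤ (C / lam) * ((c / lam) ^ k / (Nat.factorial k : ℝ)) := by
    intro k; positivity
  have hsummable_val : Summable (fun k : ℕ => (C / lam) * ((c / lam) ^ k / (Nat.factorial k : ℝ))) :=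
    (Real.summable_pow_div_factorial (c / lam)).mul_left _
  have hglint : ∀ k, ∫⁻ x in Ioi (0:ℝ), ‖g k x‖₊
      = ENNReal.ofReal ((C / lam) * ((c / lam) ^ k / (Nat.factorial k : ℝ))) := by
    intro k
    have h1 : ∫⁻ x in Ioi (0:ℝ), ‖g k x‖₊ = ENNReal.ofReal (∫ x in Ioi (0:ℝ), ‖g k x‖) :=
      (ofReal_integral_norm_eq_lintegral_enorm (hgint k)).symm
    have h2 : ∫ x in Ioi (0:ℝ), ‖g k x‖ = ∫ x in Ioi (0:ℝ), g k x :=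
      setIntegral_congr_fun measurableSet_Ioi fun x hx => Real.norm_of_nonneg (hgnn k x hx)
    rw [h1, h2, hgval k]
  have hsum_fin : ∑' k, ∫⁻ x in Ioi (0:ℝ), ‖g k x‖₊ ≠ ⊤ := by
    rw [tsum_congr hglint, ← ENNReal.ofReal_tsum_of_nonneg hval_nn hsummable_val]
    exact ENNReal.ofReal_ne_top
  have hgmeas : ∀ k, Measurable (g k) := by
    intro k
    simp only [hg_def]
    exact ((measurable_id.pow_const k).mul
      ((measurable_id.const_mul (-lam)).exp)).const_mul _
  have hint_eq : ∫ x in Ioi (0:ℝ), ∑' k, g k x = ∑' k, ∫ x in Ioi (0:ℝ), g k x :=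
    integral_tsum (fun k => (hgmeas k).aestronglyMeasurable) hsum_fin
  -- pointwise identity on Ioi 0
  have hpt : ∀ x ∈ Ioi (0:ℝ),
      Real.exp (-s * x) * ((1 / (2 * b)) * Real.exp (-(x + A ^ 2) / (2 * b)) *
        besselI0 (A * Real.sqrt x / b)) = ∑' k, g k x := by
    intro x hx
    have hx0 : (0:ℝ) ≤ x := le_of_lt hx
    have hbes : besselI0 (A * Real.sqrt x / b)
        = ∑' k : ℕ, (c * x) ^ k / ((Nat.factorial k : ℝ)) ^ 2 := by
      rw [besselI0_eq]
      refine tsum_congr fun k => ?_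
      have hb2 : (A * Real.sqrt x / b) ^ 2 / 4 = c * x := by
        rw [div_pow, mul_pow, Real.sq_sqrt hx0, hc_def]
        field_simp
      rw [hb2]
    have hexp : Real.exp (-s * x) * ((1 / (2 * b)) * Real.exp (-(x + A ^ 2) / (2 * b)))
        = C * Real.exp (-lam * x) := by
      rw [hC_def, hlam_def]
      rw [show Real.exp (-s * x) * (1 / (2 * b) * Real.exp (-(x + A ^ 2) / (2 * b)))
          = 1 / (2 * b) * (Real.exp (-s * x) * Real.exp (-(x + A ^ 2) / (2 * b))) by ring,
        ← Real.exp_add,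
        show 1 / (2 * b) * Real.exp (-A ^ 2 / (2 * b)) * Real.exp (-(s + 1 / (2 * b)) * x)
          = 1 / (2 * b) * (Real.exp (-A ^ 2 / (2 * b)) * Real.exp (-(s + 1 / (2 * b)) * x)) by ring,
        ← Real.exp_add]
      congr 1
      field_simp
      ring
    calc Real.exp (-s * x) * ((1 / (2 * b)) * Real.exp (-(x + A ^ 2) / (2 * b)) *
            besselI0 (A * Real.sqrt x / b))
        = (Real.exp (-s * x) * ((1 / (2 * b)) * Real.exp (-(x + A ^ 2) / (2 * b)))) *
            besselI0 (A * Real.sqrt x / b) := by ring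
      _ = (C * Real.exp (-lam * x)) * ∑' k : ℕ, (c * x) ^ k / ((Nat.factorial k : ℝ)) ^ 2 := by
            rw [hexp, hbes]
      _ = ∑' k : ℕ, (C * Real.exp (-lam * x)) * ((c * x) ^ k / ((Nat.factorial k : ℝ)) ^ 2) := by
            rw [tsum_mul_left]
      _ = ∑' k, g k x := by
            refine tsum_congr fun k => ?_
            simp only [hg_def]
            rw [mul_pow]
            ring
  -- summability of the pointwise series
  have hgsummable : ∀ x ∈ Ioi (0:ℝ), Summable (fun k => g k x) := by
    intro x hx
    have := (summable_aux (c * x) (mul_nonneg hc (le_of_lt hx))).mul_left (C * Real.exp (-lam * x))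
    refine this.congr fun k => ?_
    simp only [hg_def]
    rw [mul_pow]
    ring
  -- measurability of the full integrand
  have e3 : Measurable fun x : ℝ => besselI0 (A * Real.sqrt x / b) :=
    measurable_besselI0.comp ((Real.continuous_sqrt.measurable.const_mul A).div_const b)
  have hfmeas : Measurable (fun x : ℝ => Real.exp (-s * x) *
      ((1 / (2 * b)) * Real.exp (-(x + A ^ 2) / (2 * b)) * besselI0 (A * Real.sqrt x / b))) := by
    have e1 : Measurable fun x : ℝ => Real.exp (-s * x) := (measurable_id.const_mul (-s)).exp
    have e2 : Measurable fun x : ℝ => Real.exp (-(x + A ^ 2) / (2 * b)) :=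
      (((measurable_id.add_const (A ^ 2)).neg).div_const (2 * b)).exp
    exact e1.mul ((e2.const_mul _).mul e3)
  have hfnn : ∀ x : ℝ, 0 ≤ Real.exp (-s * x) *
      ((1 / (2 * b)) * Real.exp (-(x + A ^ 2) / (2 * b)) * besselI0 (A * Real.sqrt x / b)) := by
    intro x
    have h1 := besselI0_nonneg (A * Real.sqrt x / b)
    positivity
  -- finite integral
  have hf_lint : ∫⁻ x in Ioi (0:ℝ), ‖Real.exp (-s * x) *
      ((1 / (2 * b)) * Real.exp (-(x + A ^ 2) / (2 * b)) * besselI0 (A * Real.sqrt x / b))‖₊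
      < ⊤ := by
    have step1 : ∫⁻ x in Ioi (0:ℝ), ‖Real.exp (-s * x) *
        ((1 / (2 * b)) * Real.exp (-(x + A ^ 2) / (2 * b)) * besselI0 (A * Real.sqrt x / b))‖₊
        = ∫⁻ x in Ioi (0:ℝ), ∑' k, ENNReal.ofReal (g k x) := by
      refine lintegral_congr_ae ?_
      filter_upwards [ae_restrict_mem measurableSet_Ioi] with x hx
      rw [show (‖_‖₊ : ℝ≥0∞) = _ from Real.enorm_eq_ofReal (hfnn x), hpt x hx,
        ENNReal.ofReal_tsum_of_nonneg (fun k => hgnn k x hx) (hgsummable x hx)]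
    have step2 : ∫⁻ x in Ioi (0:ℝ), ∑' k, ENNReal.ofReal (g k x)
        = ∑' k, ∫⁻ x in Ioi (0:ℝ), ENNReal.ofReal (g k x) :=
      lintegral_tsum fun k => (ENNReal.measurable_ofReal.comp (hgmeas k)).aemeasurable
    have step3 : ∀ k, ∫⁻ x in Ioi (0:ℝ), ENNReal.ofReal (g k x)
        = ∫⁻ x in Ioi (0:ℝ), ‖g k x‖₊ := by
      intro k
      refine lintegral_congr_ae ?_
      filter_upwards [ae_restrict_mem measurableSet_Ioi] with x hx
      rw [show (‖_‖₊ : ℝ≥0∞) = _ from Real.enorm_eq_ofReal (hgnn k x hx)]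
    rw [step1, step2, tsum_congr step3]
    exact lt_top_iff_ne_top.2 hsum_fin
  constructor
  · exact ⟨hfmeas.aestronglyMeasurable, hf_lint⟩
  · have hlam0' : s + 1 / (2 * b) ≠ 0 := ne_of_gt (by positivity)
    have h2bs' : (2 * b * s + 1 : ℝ) ≠ 0 := ne_of_gt h2bs
    have h1 : C / lam = 1 / (2 * b * s + 1) * Real.exp (-A ^ 2 / (2 * b)) := by
      rw [hC_def, hlam_def]
      field_simp
    have h2 : Real.exp (-A ^ 2 / (2 * b)) * Real.exp (c / lam)
        = Real.exp (-(A ^ 2 * s) / (2 * b * s + 1)) := by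
      rw [← Real.exp_add]
      congr 1
      rw [hc_def, hlam_def]
      field_simp
      ring
    rw [setIntegral_congr_fun measurableSet_Ioi hpt, hint_eq, tsum_congr hgval,
      tsum_mul_left, ← exp_eq_tsum', h1, mul_assoc, h2]


lemma fubini_step {Q : ℝ → ℝ} {P : ℝ → ℝ → ℝ} {J : ℝ → ℝ} {s : ℝ}
    (hQmeas : Measurable Q) (hQnn : ∀ b ∈ Ioi (0:ℝ), 0 ≤ Q b)
    (hPmeas : Measurable (Function.uncurry P))
    (hPnn : ∀ x : ℝ, ∀ b ∈ Ioi (0:ℝ), 0 ≤ P x b)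
    (hint : ∀ b ∈ Ioi (0:ℝ), IntegrableOn (fun x => Real.exp (-s * x) * P x b) (Ioi 0))
    (hval : ∀ b ∈ Ioi (0:ℝ), ∫ x in Ioi (0:ℝ), Real.exp (-s * x) * P x b = J b)
    (hQJint : IntegrableOn (fun b => Q b * J b) (Ioi 0)) :
    ∫ x in Ioi (0:ℝ), Real.exp (-s * x) * ∫ b in Ioi (0:ℝ), Q b * P x b
      = ∫ b in Ioi (0:ℝ), Q b * J b := by
  set W : ℝ → ℝ → ℝ≥0∞ :=
    fun x b => ENNReal.ofReal (Q b * (Real.exp (-s * x) * P x b)) with hW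
  have hJnn : ∀ b ∈ Ioi (0:ℝ), 0 ≤ J b := by
    intro b hb
    rw [← hval b hb]
    exact setIntegral_nonneg measurableSet_Ioi fun x hx =>
      mul_nonneg (Real.exp_nonneg _) (hPnn x b hb)
  have hWmeas : Measurable (Function.uncurry W) := by
    have : Function.uncurry W = fun p : ℝ × ℝ =>
        ENNReal.ofReal (Q p.2 * (Real.exp (-s * p.1) * P p.1 p.2)) := rfl
    rw [this]
    exact ((hQmeas.comp measurable_snd).mul
      (((measurable_fst.const_mul (-s)).exp).mul hPmeas)).ennreal_ofReal
  have stepA : ∀ b ∈ Ioi (0:ℝ), ∫⁻ x in Ioi (0:ℝ), W x b = ENNReal.ofReal (Q b * J b) := by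
    intro b hb
    have h1 : 0 ≤ᵐ[volume.restrict (Ioi (0:ℝ))]
        fun x => Q b * (Real.exp (-s * x) * P x b) := by
      refine Filter.Eventually.of_forall fun x => ?_
      exact mul_nonneg (hQnn b hb) (mul_nonneg (Real.exp_nonneg _) (hPnn x b hb))
    have h2 : Integrable (fun x => Q b * (Real.exp (-s * x) * P x b))
        (volume.restrict (Ioi 0)) := (hint b hb).const_mul _
    have h3 := (ofReal_integral_eq_lintegral_ofReal h2 h1).symm
    simp only [hW]
    rw [h3, integral_const_mul, hval b hb]
  have stepB : ∫⁻ b in Ioi (0:ℝ), ∫⁻ x in Ioi (0:ℝ), W x b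
      = ENNReal.ofReal (∫ b in Ioi (0:ℝ), Q b * J b) := by
    rw [setLIntegral_congr_fun measurableSet_Ioi stepA]
    refine (ofReal_integral_eq_lintegral_ofReal hQJint ?_).symm
    filter_upwards [ae_restrict_mem measurableSet_Ioi] with b hb
    exact mul_nonneg (hQnn b hb) (hJnn b hb)
  have hT_ne : ∫⁻ b in Ioi (0:ℝ), ∫⁻ x in Ioi (0:ℝ), W x b ≠ ⊤ := by
    rw [stepB]; exact ENNReal.ofReal_ne_top
  have hswap : ∫⁻ x in Ioi (0:ℝ), ∫⁻ b in Ioi (0:ℝ), W x b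
      = ∫⁻ b in Ioi (0:ℝ), ∫⁻ x in Ioi (0:ℝ), W x b :=
    lintegral_lintegral_swap hWmeas.aemeasurable
  have hLmeas : Measurable fun x => ∫⁻ b in Ioi (0:ℝ), W x b :=
    hWmeas.lintegral_prod_right'
  have hfin : ∀ᵐ x ∂(volume.restrict (Ioi 0)), (∫⁻ b in Ioi (0:ℝ), W x b) ≠ ⊤ := by
    have h := hswap.trans stepB
    refine (ae_lt_top hLmeas ?_).mono fun x hx => hx.ne
    rw [h]; exact ENNReal.ofReal_ne_top
  have hLx : ∀ x : ℝ, Real.exp (-s * x) * ∫ b in Ioi (0:ℝ), Q b * P x b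
      = (∫⁻ b in Ioi (0:ℝ), W x b).toReal := by
    intro x
    have hmb : Measurable fun b => Q b * P x b :=
      hQmeas.mul (hPmeas.comp measurable_prodMk_left)
    have hnn : 0 ≤ᵐ[volume.restrict (Ioi (0:ℝ))] fun b => Q b * P x b := by
      filter_upwards [ae_restrict_mem measurableSet_Ioi] with b hb
      exact mul_nonneg (hQnn b hb) (hPnn x b hb)
    rw [integral_eq_lintegral_of_nonneg_ae hnn hmb.aestronglyMeasurable]
    have h4 : ∫⁻ b in Ioi (0:ℝ), W x b
        = ENNReal.ofReal (Real.exp (-s * x))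
            * ∫⁻ b in Ioi (0:ℝ), ENNReal.ofReal (Q b * P x b) := by
      rw [← lintegral_const_mul _ hmb.ennreal_ofReal]
      refine lintegral_congr fun b => ?_
      simp only [hW]
      rw [show Q b * (Real.exp (-s * x) * P x b)
          = Real.exp (-s * x) * (Q b * P x b) by ring,
        ENNReal.ofReal_mul (Real.exp_nonneg _)]
    rw [h4, ENNReal.toReal_mul, ENNReal.toReal_ofReal (Real.exp_nonneg _)]
  calc ∫ x in Ioi (0:ℝ), Real.exp (-s * x) * ∫ b in Ioi (0:ℝ), Q b * P x b
      = ∫ x in Ioi (0:ℝ), (∫⁻ b in Ioi (0:ℝ), W x b).toReal :=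
        integral_congr_ae (Filter.Eventually.of_forall hLx)
    _ = (∫⁻ x in Ioi (0:ℝ), ENNReal.ofReal ((∫⁻ b in Ioi (0:ℝ), W x b).toReal)).toReal := by
        rw [integral_eq_lintegral_of_nonneg_ae
          (Filter.Eventually.of_forall fun x => ENNReal.toReal_nonneg)
          hLmeas.ennreal_toReal.aestronglyMeasurable]
    _ = (∫⁻ x in Ioi (0:ℝ), ∫⁻ b in Ioi (0:ℝ), W x b).toReal := by
        congr 1
        refine lintegral_congr_ae ?_
        filter_upwards [hfin] with x hx
        rw [ENNReal.ofReal_toReal hx]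
    _ = (ENNReal.ofReal (∫ b in Ioi (0:ℝ), Q b * J b)).toReal := by rw [hswap, stepB]
    _ = ∫ b in Ioi (0:ℝ), Q b * J b :=
        ENNReal.toReal_ofReal (setIntegral_nonneg measurableSet_Ioi fun b hb =>
          mul_nonneg (hQnn b hb) (hJnn b hb))


lemma R_integrable (α b₀ A s : ℝ) (hα : 0 < α) (hb₀ : 0 < b₀) (hA : 0 ≤ A) (hs : 0 ≤ s) :
    IntegrableOn (fun b : ℝ => b ^ (α - 1) / (2 * b * s + 1) *
      Real.exp (-(A ^ 2 * s) / (2 * b * s + 1) - α * b / b₀)) (Ioi 0) := by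
  have hD : IntegrableOn (fun b : ℝ => b ^ (α - 1) * Real.exp (-(α / b₀) * b)) (Ioi 0) := by
    have h := integrableOn_rpow_mul_exp_neg_mul_rpow (p := 1) (s := α - 1)
      (by linarith) zero_lt_one (div_pos hα hb₀)
    refine h.congr_fun (fun b hb => ?_) measurableSet_Ioi
    simp only [Real.rpow_one]
  have hmeas : Measurable (fun b : ℝ => b ^ (α - 1) / (2 * b * s + 1) *
      Real.exp (-(A ^ 2 * s) / (2 * b * s + 1) - α * b / b₀)) := by
    have m1 : Measurable fun b : ℝ => b ^ (α - 1) := by measurability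
    have m2 : Measurable fun b : ℝ => (2 * b * s + 1 : ℝ) :=
      ((measurable_id.const_mul 2).mul_const s).add_const 1
    have m3 : Measurable fun b : ℝ =>
        Real.exp (-(A ^ 2 * s) / (2 * b * s + 1) - α * b / b₀) :=
      ((measurable_const.div m2).sub
        (((measurable_id.const_mul α).div_const b₀))).exp
    exact (m1.div m2).mul m3
  refine Integrable.mono' hD hmeas.aestronglyMeasurable ?_
  filter_upwards [ae_restrict_mem measurableSet_Ioi] with b hb
  have hb0 : (0:ℝ) < b := hb
  have h2bs : (0:ℝ) < 2 * b * s + 1 := by positivity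
  have hrnn : 0 ≤ b ^ (α - 1) / (2 * b * s + 1) *
      Real.exp (-(A ^ 2 * s) / (2 * b * s + 1) - α * b / b₀) := by positivity
  rw [Real.norm_of_nonneg hrnn]
  have h0 : 0 ≤ A ^ 2 * s / (2 * b * s + 1) := by positivity
  have he : α * b / b₀ = α / b₀ * b := by ring
  refine mul_le_mul ?_ ?_ (Real.exp_nonneg _) (Real.rpow_nonneg hb0.le _)
  · exact div_le_self (Real.rpow_nonneg hb0.le _) (by nlinarith)
  · rw [Real.exp_le_exp]
    rw [neg_div] at *
    nlinarith [h0, he]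

end HKaux

/-- MGF of the H-K distribution: if, conditionally on `b`, `X` has noncentral chi-square
density `(1/(2b)) exp(-(x+A²)/(2b)) I₀(A√x/b)` and `b` is Gamma distributed with shape `α`
and mean `b₀`, then
`E[e^{-sX}] = ((α/b₀)^α/Γ(α)) ∫₀^∞ (b^{α-1}/(2bs+1)) exp(-A²s/(2bs+1) - αb/b₀) db`. -/
theorem stmt_2 (α b₀ A s : ℝ) (hα : 0 < α) (hb₀ : 0 < b₀) (hA : 0 ≤ A) (hs : 0 ≤ s) :
    (∫ x in Ioi (0 : ℝ), Real.exp (-s * x) *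
        ∫ b in Ioi (0 : ℝ),
          ((α / b₀) ^ α * b ^ (α - 1) * Real.exp (-α * b / b₀) / Real.Gamma α) *
            ((1 / (2 * b)) * Real.exp (-(x + A ^ 2) / (2 * b)) *
              besselI0 (A * Real.sqrt x / b))) =
      ((α / b₀) ^ α / Real.Gamma α) *
        ∫ b in Ioi (0 : ℝ),
          (b ^ (α - 1) / (2 * b * s + 1)) *
            Real.exp (-(A ^ 2 * s) / (2 * b * s + 1) - α * b / b₀) := by
  have hΓ : 0 < Real.Gamma α := Real.Gamma_pos_of_pos hα
  have hpow : 0 < (α / b₀) ^ α := Real.rpow_pos_of_pos (div_pos hα hb₀) α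
  have hRint := HKaux.R_integrable α b₀ A s hα hb₀ hA hs
  have hQJ : ∀ b ∈ Ioi (0:ℝ),
      ((α / b₀) ^ α * b ^ (α - 1) * Real.exp (-α * b / b₀) / Real.Gamma α) *
        (1 / (2 * b * s + 1) * Real.exp (-(A ^ 2 * s) / (2 * b * s + 1)))
      = (α / b₀) ^ α / Real.Gamma α *
        (b ^ (α - 1) / (2 * b * s + 1) *
          Real.exp (-(A ^ 2 * s) / (2 * b * s + 1) - α * b / b₀)) := by
    intro b hb
    rw [show -(A ^ 2 * s) / (2 * b * s + 1) - α * b / b₀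
        = -(A ^ 2 * s) / (2 * b * s + 1) + -α * b / b₀ by ring, Real.exp_add]
    ring
  have hmeasQ : Measurable fun b : ℝ =>
      (α / b₀) ^ α * b ^ (α - 1) * Real.exp (-α * b / b₀) / Real.Gamma α := by
    have m1 : Measurable fun b : ℝ => b ^ (α - 1) := by measurability
    exact ((m1.const_mul _).mul
      ((measurable_id.const_mul (-α)).div_const b₀).exp).div_const _
  have hmeasP : Measurable (Function.uncurry fun (x b : ℝ) =>
      1 / (2 * b) * Real.exp (-(x + A ^ 2) / (2 * b)) * besselI0 (A * Real.sqrt x / b)) := by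
    have m1 : Measurable fun p : ℝ × ℝ => 1 / (2 * p.2) :=
      measurable_const.div (measurable_snd.const_mul 2)
    have m2 : Measurable fun p : ℝ × ℝ => Real.exp (-(p.1 + A ^ 2) / (2 * p.2)) :=
      (((measurable_fst.add_const (A ^ 2)).neg).div (measurable_snd.const_mul 2)).exp
    have m3 : Measurable fun p : ℝ × ℝ => besselI0 (A * Real.sqrt p.1 / p.2) :=
      HKaux.measurable_besselI0.comp
        (((Real.continuous_sqrt.measurable.comp measurable_fst).const_mul A).div measurable_snd)
    exact (m1.mul m2).mul m3
  have hPnn : ∀ x : ℝ, ∀ b ∈ Ioi (0:ℝ), 0 ≤ 1 / (2 * b) *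
      Real.exp (-(x + A ^ 2) / (2 * b)) * besselI0 (A * Real.sqrt x / b) := by
    intro x b hb
    have hb0 : (0:ℝ) < b := hb
    have h1 := HKaux.besselI0_nonneg (A * Real.sqrt x / b)
    positivity
  have hQnn : ∀ b ∈ Ioi (0:ℝ), 0 ≤ (α / b₀) ^ α * b ^ (α - 1) *
      Real.exp (-α * b / b₀) / Real.Gamma α := by
    intro b hb
    have hb0 : (0:ℝ) < b := hb
    positivity
  have hKey := fun b (hb : b ∈ Ioi (0:ℝ)) => HKaux.inner_key A s b hA hs hb
  have hQJint : IntegrableOn (fun b : ℝ =>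
      ((α / b₀) ^ α * b ^ (α - 1) * Real.exp (-α * b / b₀) / Real.Gamma α) *
        (1 / (2 * b * s + 1) * Real.exp (-(A ^ 2 * s) / (2 * b * s + 1)))) (Ioi 0) := by
    have base : IntegrableOn (fun b : ℝ => (α / b₀) ^ α / Real.Gamma α *
        (b ^ (α - 1) / (2 * b * s + 1) *
          Real.exp (-(A ^ 2 * s) / (2 * b * s + 1) - α * b / b₀))) (Ioi 0) :=
      hRint.const_mul _
    refine base.congr_fun ?_ measurableSet_Ioi
    intro b hb
    exact (hQJ b hb).symm
  have H1 := HKaux.fubini_step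
    (Q := fun b => (α / b₀) ^ α * b ^ (α - 1) * Real.exp (-α * b / b₀) / Real.Gamma α)
    (P := fun x b => 1 / (2 * b) * Real.exp (-(x + A ^ 2) / (2 * b)) *
      besselI0 (A * Real.sqrt x / b))
    (J := fun b => 1 / (2 * b * s + 1) * Real.exp (-(A ^ 2 * s) / (2 * b * s + 1)))
    hmeasQ hQnn hmeasP hPnn (fun b hb => (hKey b hb).1) (fun b hb => (hKey b hb).2) hQJint
  have H2 : ∫ b in Ioi (0:ℝ),
      ((α / b₀) ^ α * b ^ (α - 1) * Real.exp (-α * b / b₀) / Real.Gamma α) *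
        (1 / (2 * b * s + 1) * Real.exp (-(A ^ 2 * s) / (2 * b * s + 1)))
      = (α / b₀) ^ α / Real.Gamma α * ∫ b in Ioi (0:ℝ),
          b ^ (α - 1) / (2 * b * s + 1) *
            Real.exp (-(A ^ 2 * s) / (2 * b * s + 1) - α * b / b₀) := by
    rw [← integral_const_mul]
    exact setIntegral_congr_fun measurableSet_Ioi hQJ
  exact H1.trans H2
end

section
/- For α > 0, A ≥ 0, b₀ > 0, the conditional MGF factor satisfies the pointwise limit: for each fixed b > 0, (1/(2bs+1)) exp(-A s/(2bs+1)) · s → (1/(2b)) exp(-A/(2b)) as s → ∞. Consequently the H-K MGF M(s) = ((α/b₀)^α/Γ(α)) ∫₀^∞ (b^{α-1}/(2bs+1)) exp(-As/(2bs+1) - αb/b₀) db satisfies lim_{s→∞} s·M(s) = ((α/b₀)^α/(2Γ(α))) ∫₀^∞ b^{α-2} exp(-A/(2b) - αb/b₀) db, provided α > 1 (or the integral converges). -/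
open Real MeasureTheory Set Filter

lemma part_i (A : ℝ) (b : ℝ) (hb : 0 < b) :
    Tendsto (fun s : ℝ => (1 / (2 * b * s + 1)) * Real.exp (-A * s / (2 * b * s + 1)) * s)
      atTop (nhds ((1 / (2 * b)) * Real.exp (-A / (2 * b)))) := by
  have hb2 : (2 * b) ≠ 0 := by positivity
  have hinv : Tendsto (fun s : ℝ => 2 * b + 1 / s) atTop (nhds (2 * b + 0)) := by
    refine Tendsto.add tendsto_const_nhds ?_
    exact tendsto_inv_atTop_zero.congr (fun s => (one_div s).symm)
  have h2 : Tendsto (fun s : ℝ => 1 / (2 * b + 1 / s)) atTop (nhds (1 / (2 * b))) := by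
    have := hinv.inv₀ (by simpa using hb2)
    simpa [one_div] using this
  have h1 : Tendsto (fun s : ℝ => s / (2 * b * s + 1)) atTop (nhds (1 / (2 * b))) := by
    refine h2.congr' ?_
    filter_upwards [eventually_gt_atTop (0 : ℝ)] with s hs
    have hx : 2 * b * s + 1 ≠ 0 := by positivity
    field_simp
  have hmain := h1.mul ((Real.continuous_exp.tendsto _).comp (h1.const_mul (-A)))
  have heq : ∀ s : ℝ, (1 / (2 * b * s + 1)) * Real.exp (-A * s / (2 * b * s + 1)) * s
      = s / (2 * b * s + 1) * Real.exp (-A * (s / (2 * b * s + 1))) := by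
    intro s; rw [← mul_div_assoc]; ring
  rw [show -A / (2 * b) = -A * (1 / (2 * b)) by ring]
  exact hmain.congr (fun s => (heq s).symm)

/-- (i) For fixed `b > 0`, `s·(1/(2bs+1))·exp(-As/(2bs+1)) → (1/(2b))·exp(-A/(2b))` as
`s → ∞`; (ii) consequently, for `α > 1`, the H-K MGF
`M(s) = ((α/b₀)^α/Γ(α)) ∫₀^∞ (b^{α-1}/(2bs+1)) exp(-As/(2bs+1) - αb/b₀) db`
satisfies `s·M(s) → ((α/b₀)^α/(2Γ(α))) ∫₀^∞ b^{α-2} exp(-A/(2b) - αb/b₀) db`. -/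
theorem stmt_4 (α A b₀ : ℝ) (hα : 0 < α) (hA : 0 ≤ A) (hb₀ : 0 < b₀) :
    (∀ b : ℝ, 0 < b →
      Tendsto (fun s : ℝ => (1 / (2 * b * s + 1)) * Real.exp (-A * s / (2 * b * s + 1)) * s)
        atTop (nhds ((1 / (2 * b)) * Real.exp (-A / (2 * b))))) ∧
    (1 < α →
      Tendsto (fun s : ℝ => s *
          (((α / b₀) ^ α / Real.Gamma α) *
            ∫ b in Ioi (0 : ℝ),
              (b ^ (α - 1) / (2 * b * s + 1)) *
                Real.exp (-A * s / (2 * b * s + 1) - α * b / b₀)))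
        atTop
        (nhds (((α / b₀) ^ α / (2 * Real.Gamma α)) *
          ∫ b in Ioi (0 : ℝ), b ^ (α - 2) * Real.exp (-A / (2 * b) - α * b / b₀)))) := by
  refine ⟨fun b hb => part_i A b hb, fun hα1 => ?_⟩
  set C : ℝ := (α / b₀) ^ α / Real.Gamma α with hC
  set F : ℝ → ℝ → ℝ := fun s b =>
    s * ((b ^ (α - 1) / (2 * b * s + 1)) *
      Real.exp (-A * s / (2 * b * s + 1) - α * b / b₀)) with hF
  set g : ℝ → ℝ := fun b => (1 / 2) * (b ^ (α - 2) * Real.exp (-A / (2 * b) - α * b / b₀))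
    with hg
  set bound : ℝ → ℝ := fun b => (1 / 2) * (b ^ (α - 2) * Real.exp (-(α / b₀) * b ^ (1:ℝ)))
    with hbound
  have hbound_int : Integrable bound (volume.restrict (Ioi (0:ℝ))) := by
    refine Integrable.const_mul ?_ _
    exact integrableOn_rpow_mul_exp_neg_mul_rpow (by linarith) one_pos (by positivity)
  -- key dominated convergence
  have key : Tendsto (fun s => ∫ b in Ioi (0:ℝ), F s b) atTop
      (nhds (∫ b in Ioi (0:ℝ), g b)) := by
    refine tendsto_integral_filter_of_dominated_convergence bound ?_ ?_ hbound_int ?_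
    · filter_upwards with s
      apply Measurable.aestronglyMeasurable
      fun_prop
    · filter_upwards [eventually_ge_atTop (0:ℝ)] with s hs
      rw [ae_restrict_iff' measurableSet_Ioi]
      filter_upwards with b hb
      simp only [mem_Ioi] at hb
      have hx : 0 < 2 * b * s + 1 := by positivity
      have hpow : (0:ℝ) < b ^ (α - 1) := rpow_pos_of_pos hb _
      have habs : |F s b| = F s b := by
        rw [abs_of_nonneg]
        apply mul_nonneg hs
        positivity
      rw [Real.norm_eq_abs, habs, hF]
      have h1 : s / (2 * b * s + 1) ≤ 1 / (2 * b) := by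
        rw [div_le_div_iff₀ hx (by positivity)]
        nlinarith
      have h2 : Real.exp (-A * s / (2 * b * s + 1) - α * b / b₀)
          ≤ Real.exp (-(α / b₀) * b ^ (1:ℝ)) := by
        apply Real.exp_le_exp.2
        rw [Real.rpow_one]
        have : -A * s / (2 * b * s + 1) ≤ 0 := by
          apply div_nonpos_of_nonpos_of_nonneg
          · nlinarith
          · linarith
        have heq : -(α / b₀) * b = -(α * b / b₀) := by ring
        rw [heq]; linarith
      calc s * ((b ^ (α - 1) / (2 * b * s + 1)) *
            Real.exp (-A * s / (2 * b * s + 1) - α * b / b₀))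
          = (s / (2 * b * s + 1)) * (b ^ (α - 1) *
            Real.exp (-A * s / (2 * b * s + 1) - α * b / b₀)) := by ring
        _ ≤ (1 / (2 * b)) * (b ^ (α - 1) * Real.exp (-(α / b₀) * b ^ (1:ℝ))) := by
            apply mul_le_mul h1 ?_ (by positivity) (by positivity)
            exact mul_le_mul_of_nonneg_left h2 hpow.le
        _ = bound b := by
            rw [hbound]
            have : b ^ (α - 1) = b ^ (α - 2) * b := by
              rw [show α - 1 = (α - 2) + 1 by ring, Real.rpow_add_one hb.ne']
            rw [this]
            field_simp
    · rw [ae_restrict_iff' measurableSet_Ioi]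
      filter_upwards with b hb
      simp only [mem_Ioi] at hb
      have hc := (part_i A b hb).const_mul (b ^ (α - 1) * Real.exp (-(α * b / b₀)))
      have heqF : ∀ s : ℝ, F s b
          = (b ^ (α - 1) * Real.exp (-(α * b / b₀))) *
            ((1 / (2 * b * s + 1)) * Real.exp (-A * s / (2 * b * s + 1)) * s) := by
        intro s
        simp only [hF]
        rw [show -A * s / (2 * b * s + 1) - α * b / b₀
            = -A * s / (2 * b * s + 1) + -(α * b / b₀) by ring, Real.exp_add]
        ring
      have heqg : g b = (b ^ (α - 1) * Real.exp (-(α * b / b₀))) *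
          ((1 / (2 * b)) * Real.exp (-A / (2 * b))) := by
        simp only [hg]
        rw [show -A / (2 * b) - α * b / b₀ = -A / (2 * b) + -(α * b / b₀) by ring,
          Real.exp_add]
        have : b ^ (α - 1) = b ^ (α - 2) * b := by
          rw [show α - 1 = (α - 2) + 1 by ring, Real.rpow_add_one hb.ne']
        rw [this]
        field_simp
      rw [heqg]
      exact hc.congr (fun s => (heqF s).symm)
  have hkey2 := key.const_mul C
  have hGamma : Real.Gamma α ≠ 0 := (Real.Gamma_pos_of_pos hα).ne'
  have hfun : ∀ s : ℝ, C * ∫ b in Ioi (0:ℝ), F s b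
      = s * (C * ∫ b in Ioi (0:ℝ), (b ^ (α - 1) / (2 * b * s + 1)) *
          Real.exp (-A * s / (2 * b * s + 1) - α * b / b₀)) := by
    intro s
    rw [hF, integral_const_mul]
    ring
  have hlim : ((α / b₀) ^ α / (2 * Real.Gamma α)) *
      (∫ b in Ioi (0:ℝ), b ^ (α - 2) * Real.exp (-A / (2 * b) - α * b / b₀))
      = C * ∫ b in Ioi (0:ℝ), g b := by
    simp only [hg]
    rw [integral_const_mul, hC]
    ring
  rw [hlim]
  exact hkey2.congr hfun
end
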